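/- For nonnegative integers s₁, s₂, …, s_r with r > 1, the non-positive MPL satisfies the expansion Li⁻_{(s₁,…,s_r)} = ∑_{k₁=0}^{s₁} C(s₁,k₁) · Li⁻_{k₁} · Li⁻_{(s₁+s₂−k₁, s₃, …, s_r)}, where Li⁻_k denotes the depth-one function ∑_{n>0} n^k z^n. -/

import Mathlib

open PowerSeries Finset

/-- Coefficient at `z^n` of the non-positive MPL attached to an index list:
for `s = (s₁,…,s_r)` this is `∑_{n = n₁ > n₂ > ⋯ > n_r > 0} n₁^{s₁}⋯n_r^{s_r}`. -/
def liCoeff : List ℕ → ℕ → ℚ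
  | [], n => if n = 0 then 1 else 0
  | s :: t, n => if n = 0 then 0 else (n : ℚ) ^ s * ∑ m ∈ Finset.range n, liCoeff t m

/-- The non-positive multiple polylogarithm
`Li⁻_{(s₁,…,s_r)}(z) = ∑_{n₁>⋯>n_r>0} n₁^{s₁}⋯n_r^{s_r} z^{n₁} ∈ ℚ⟦z⟧`. -/
noncomputable def Li (s : List ℕ) : PowerSeries ℚ := PowerSeries.mk (liCoeff s)


lemma liCoeff_single (k n : ℕ) : liCoeff [k] n = if n = 0 then 0 else (n : ℚ) ^ k := by
  cases n with
  | zero => simp [liCoeff]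
  | succ m => simp [liCoeff, Finset.sum_ite_eq' (Finset.range (m+1)) 0 (fun _ => (1:ℚ))]

lemma coeff_Li_mul (k : ℕ) (s : List ℕ) (n : ℕ) :
    PowerSeries.coeff n (Li [k] * Li s) =
      ∑ i ∈ Finset.range n, ((i : ℚ) + 1) ^ k * liCoeff s (n - 1 - i) := by
  rw [PowerSeries.coeff_mul, Finset.Nat.sum_antidiagonal_eq_sum_range_succ_mk,
    Finset.sum_range_succ']
  simp [Li, liCoeff_single, Nat.sub_sub, add_comm 1]

theorem Li_cons_expansion (s₁ s₂ : ℕ) (t : List ℕ) :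
    Li (s₁ :: s₂ :: t) =
      ∑ k ∈ Finset.range (s₁ + 1),
        ((s₁.choose k : ℚ)) • (Li [k] * Li ((s₁ + s₂ - k) :: t)) := by
  ext n
  rw [map_sum]
  simp only [PowerSeries.coeff_smul, coeff_Li_mul, smul_eq_mul, Finset.mul_sum]
  rw [Finset.sum_comm]
  cases n with
  | zero => simp [Li, liCoeff]
  | succ N =>
    have hL : PowerSeries.coeff (N+1) (Li (s₁ :: s₂ :: t)) =
        ∑ i ∈ Finset.range (N+1), ((N:ℚ)+1) ^ s₁ * liCoeff (s₂ :: t) (N + 1 - 1 - i) := by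
      conv_rhs => rw [Finset.sum_range_reflect
        (fun j => ((N:ℚ)+1) ^ s₁ * liCoeff (s₂ :: t) j) (N+1)]
      simp [Li, liCoeff, Finset.mul_sum]
    rw [hL]
    apply Finset.sum_congr rfl
    intro i hi
    simp only [Finset.mem_range] at hi
    set m := N + 1 - 1 - i with hm
    rcases Nat.eq_zero_or_pos m with h0 | hpos
    · simp [h0, liCoeff]
    · have hmi : (i : ℚ) + 1 + (m : ℚ) = (N : ℚ) + 1 := by
        exact_mod_cast congrArg (Nat.cast : ℕ → ℚ) (by omega : i + 1 + m = N + 1)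
      have hifz : m ≠ 0 := hpos.ne'
      simp only [liCoeff, if_neg hifz]
      rw [show ((N:ℚ)+1) ^ s₁ = (((i:ℚ)+1) + (m:ℚ)) ^ s₁ from by rw [hmi], add_pow]
      rw [Finset.sum_mul]
      apply Finset.sum_congr rfl
      intro k hk
      simp only [Finset.mem_range] at hk
      have hks : k ≤ s₁ := Nat.lt_succ_iff.mp hk
      rw [show s₁ + s₂ - k = s₁ - k + s₂ by omega, pow_add]
      ring
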